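/- Let n, k, d be integers with k ≥ 0, d ≥ 1 and n ≥ k + d, and let A, B ⊆ [n] with |A| = k and |B| = k + d. Then ∑_{s=1}^{n−k−d+1} |{S ⊆ [n] : |S| = s, S ∩ A = ∅, |S ∩ B| = 1}| / ((n−k)·C(n−k−1, s−1)) = 1, where C(·,·) denotes the binomial coefficient and division is over the reals. -/

import Mathlib

open Finset

lemma count_eq (n : ℕ) (A B : Finset (Fin n)) (s : ℕ) (hs : 1 ≤ s) :
    (Finset.univ.filter (fun S : Finset (Fin n) =>
        S.card = s ∧ S ∩ A = ∅ ∧ (S ∩ B).card = 1)).card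
      = (B \ A).card * Nat.choose ((A ∪ B)ᶜ.card) (s - 1) := by
  rw [← Finset.card_powersetCard, ← Finset.card_product]
  refine (Finset.card_bij (fun (p : Fin n × Finset (Fin n)) (_ : p ∈ (B \ A) ×ˢ Finset.powersetCard (s-1) (A ∪ B)ᶜ) => insert p.1 p.2) ?_ ?_ ?_).symm
  · rintro ⟨x, T⟩ hp
    simp only [Finset.mem_product, Finset.mem_sdiff, Finset.mem_powersetCard] at hp
    obtain ⟨⟨hxB, hxA⟩, hTsub, hTcard⟩ := hp
    have hxT : x ∉ T := by
      intro hxT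
      have := hTsub hxT
      simp [Finset.mem_compl, Finset.mem_union] at this
      exact this.2 hxB
    have hTA : ∀ y ∈ T, y ∉ A := fun y hy => by
      have := hTsub hy; simp [Finset.mem_compl, Finset.mem_union] at this; exact this.1
    have hTB : ∀ y ∈ T, y ∉ B := fun y hy => by
      have := hTsub hy; simp [Finset.mem_compl, Finset.mem_union] at this; exact this.2
    simp only [Finset.mem_filter, Finset.mem_univ, true_and]
    refine ⟨?_, ?_, ?_⟩
    · rw [Finset.card_insert_of_notMem hxT, hTcard, Nat.sub_add_cancel hs]
    · ext y; simp only [Finset.mem_inter, Finset.mem_insert, Finset.notMem_empty, iff_false]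
      rintro ⟨hy | hy, hyA⟩
      · exact hxA (hy ▸ hyA)
      · exact hTA y hy hyA
    · have : insert x T ∩ B = {x} := by
        ext y; simp only [Finset.mem_inter, Finset.mem_insert, Finset.mem_singleton]
        constructor
        · rintro ⟨hy | hy, hyB⟩
          · exact hy
          · exact absurd hyB (hTB y hy)
        · rintro rfl; exact ⟨Or.inl rfl, hxB⟩
      rw [this, Finset.card_singleton]
  · rintro ⟨x, T⟩ hp ⟨x', T'⟩ hp' heq
    replace heq : insert x T = insert x' T' := heq
    simp only [Finset.mem_product, Finset.mem_sdiff, Finset.mem_powersetCard] at hp hp'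
    obtain ⟨⟨hxB, hxA⟩, hTsub, hTcard⟩ := hp
    obtain ⟨⟨hxB', hxA'⟩, hTsub', hTcard'⟩ := hp'
    have hxT : x ∉ T := fun hxT => by
      have := hTsub hxT; simp [Finset.mem_compl, Finset.mem_union] at this; exact this.2 hxB
    have hxT' : x' ∉ T' := fun hxT => by
      have := hTsub' hxT; simp [Finset.mem_compl, Finset.mem_union] at this; exact this.2 hxB'
    have hTB : ∀ y ∈ T, y ∉ B := fun y hy => by
      have := hTsub hy; simp [Finset.mem_compl, Finset.mem_union] at this; exact this.2
    have hTB' : ∀ y ∈ T', y ∉ B := fun y hy => by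
      have := hTsub' hy; simp [Finset.mem_compl, Finset.mem_union] at this; exact this.2
    have hIx : insert x T ∩ B = {x} := by
      ext y; simp only [Finset.mem_inter, Finset.mem_insert, Finset.mem_singleton]
      constructor
      · rintro ⟨hy | hy, hyB⟩
        · exact hy
        · exact absurd hyB (hTB y hy)
      · rintro rfl; exact ⟨Or.inl rfl, hxB⟩
    have hIx' : insert x' T' ∩ B = {x'} := by
      ext y; simp only [Finset.mem_inter, Finset.mem_insert, Finset.mem_singleton]
      constructor
      · rintro ⟨hy | hy, hyB⟩
        · exact hy
        · exact absurd hyB (hTB' y hy)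
      · rintro rfl; exact ⟨Or.inl rfl, hxB'⟩
    have hxx : x = x' := by
      have : ({x} : Finset (Fin n)) = {x'} := by rw [← hIx, ← hIx', heq]
      simpa using this
    subst hxx
    have hTT : T = T' := by
      have h1 : T = insert x T \ {x} := by
        rw [Finset.sdiff_singleton_eq_erase, Finset.erase_insert hxT]
      have h2 : T' = insert x T' \ {x} := by
        rw [Finset.sdiff_singleton_eq_erase, Finset.erase_insert hxT']
      rw [h1, h2, heq]
    rw [hTT]
  · intro S hS
    simp only [Finset.mem_filter, Finset.mem_univ, true_and] at hS
    obtain ⟨hcard, hSA, hSB⟩ := hS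
    obtain ⟨a, ha⟩ := Finset.card_eq_one.mp hSB
    have haS : a ∈ S ∧ a ∈ B := by
      have : a ∈ S ∩ B := ha ▸ Finset.mem_singleton_self a
      exact Finset.mem_inter.mp this
    have haA : a ∉ A := fun h => by
      have : a ∈ S ∩ A := Finset.mem_inter.mpr ⟨haS.1, h⟩
      rw [hSA] at this; exact Finset.notMem_empty a this
    refine ⟨(a, S.erase a), ?_, ?_⟩
    · simp only [Finset.mem_product, Finset.mem_sdiff, Finset.mem_powersetCard]
      refine ⟨⟨haS.2, haA⟩, ?_, ?_⟩
      · intro y hy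
        obtain ⟨hya, hyS⟩ := Finset.mem_erase.mp hy
        simp only [Finset.mem_compl, Finset.mem_union]
        push_neg
        constructor
        · intro hyA
          have : y ∈ S ∩ A := Finset.mem_inter.mpr ⟨hyS, hyA⟩
          rw [hSA] at this; exact Finset.notMem_empty y this
        · intro hyB
          have : y ∈ S ∩ B := Finset.mem_inter.mpr ⟨hyS, hyB⟩
          rw [ha] at this
          exact hya (Finset.mem_singleton.mp this)
      · rw [Finset.card_erase_of_mem haS.1, hcard]
    · exact Finset.insert_erase haS.1

lemma nat_sum_id (N c : ℕ) (hc : c ≤ N) :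
    ∑ j ∈ Finset.range (c+1), Nat.choose (N-j) (c-j) = Nat.choose (N+1) (N-c+1) := by
  rw [← Finset.sum_range_reflect]
  have h1 : ∀ j ∈ Finset.range (c+1),
      Nat.choose (N-(c+1-1-j)) (c-(c+1-1-j)) = Nat.choose (N-c+j) (N-c) := by
    intro j hj
    rw [Finset.mem_range, Nat.lt_succ_iff] at hj
    calc Nat.choose (N-(c+1-1-j)) (c-(c+1-1-j))
        = Nat.choose (N-c+j) ((N-c+j) - (N-c)) := by congr 1 <;> omega
      _ = _ := Nat.choose_symm (by omega)
  rw [Finset.sum_congr rfl h1]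
  have h2 : ∑ m ∈ Finset.Icc (N-c) N, Nat.choose m (N-c)
      = ∑ j ∈ Finset.range (c+1), Nat.choose (N-c+j) (N-c) := by
    rw [← Finset.Ico_add_one_right_eq_Icc, Finset.sum_Ico_eq_sum_range,
      show N+1-(N-c) = c+1 from by omega]
  rw [← h2, Nat.sum_Icc_choose]

lemma sum_id (N c : ℕ) (hc : c ≤ N) :
    ∑ j ∈ Finset.range (c+1),
      (((N+1-c) * Nat.choose c j : ℕ) : ℝ) / ((N+1 : ℕ) * (Nat.choose N j : ℕ)) = 1 := by
  have hstep : ∀ j ∈ Finset.range (c+1),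
      (((N+1-c) * Nat.choose c j : ℕ) : ℝ) / ((N+1 : ℕ) * (Nat.choose N j : ℕ))
      = (((N+1-c) * Nat.choose (N-j) (c-j) : ℕ) : ℝ) / ((N+1 : ℕ) * (Nat.choose N c : ℕ)) := by
    intro j hj
    rw [Finset.mem_range, Nat.lt_succ_iff] at hj
    have hNj : 0 < Nat.choose N j := Nat.choose_pos (hj.trans hc)
    have hNc : 0 < Nat.choose N c := Nat.choose_pos hc
    rw [div_eq_div_iff (by positivity) (by positivity)]
    have key := Nat.choose_mul (n := N) hj
    have keyN : (N+1-c) * Nat.choose c j * ((N+1) * Nat.choose N c)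
        = (N+1-c) * Nat.choose (N-j) (c-j) * ((N+1) * Nat.choose N j) := by
      rw [show (N+1-c) * Nat.choose c j * ((N+1) * Nat.choose N c)
          = ((N+1-c)*(N+1)) * (Nat.choose N c * Nat.choose c j) from by ring, key]
      ring
    exact_mod_cast keyN
  rw [Finset.sum_congr rfl hstep, ← Finset.sum_div, ← Nat.cast_sum, ← Finset.mul_sum,
    nat_sum_id N c hc]
  have hnum : (N+1-c) * Nat.choose (N+1) (N-c+1) = (N+1) * Nat.choose N c := by
    have h1 := Nat.add_one_mul_choose_eq N (N-c)
    have h2 : Nat.choose N (N-c) = Nat.choose N c := Nat.choose_symm hc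
    have h3 : N+1-c = N-c+1 := by omega
    rw [h3, ← h2, h1, Nat.mul_comm]
  rw [hnum]
  have : ((N+1 : ℕ) : ℝ) * (Nat.choose N c : ℕ) ≠ 0 := by
    have := Nat.choose_pos hc
    positivity
  rw [Nat.cast_mul]
  exact div_self this

theorem stmt2 (n k d : ℕ) (hd : 1 ≤ d) (hn : k + d ≤ n)
    (A B : Finset (Fin n)) (hA : A.card = k) (hB : B.card = k + d) :
    ∑ s ∈ Finset.Icc 1 (n - k - d + 1),
      ((Finset.univ.filter (fun S : Finset (Fin n) =>
          S.card = s ∧ S ∩ A = ∅ ∧ (S ∩ B).card = 1)).card : ℝ)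
        / (((n:ℝ) - (k:ℝ)) * (Nat.choose (n - k - 1) (s - 1) : ℝ)) = 1 := by
  classical
  set b := (B \ A).card with hbdef
  have hsd : (B \ A).card + A.card = (B ∪ A).card := Finset.card_sdiff_add_card B A
  have hABc : (A ∪ B).card = k + b := by
    rw [Finset.union_comm, ← hsd, hA, Nat.add_comm]
  have hun : k + b ≤ n := by
    have h := Finset.card_le_univ (A ∪ B)
    rw [hABc, Fintype.card_fin] at h
    exact h
  have hdb : d ≤ b := by
    have h := Finset.le_card_sdiff A B
    rw [hA, hB] at h
    omega
  have hcc : (A ∪ B)ᶜ.card = n - (k + b) := by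
    rw [Finset.card_compl, Fintype.card_fin, hABc]
  set c := n - (k + b) with hcdef
  have hkn : k ≤ n := by omega
  have hterm : ∀ s ∈ Finset.Icc 1 (n - k - d + 1),
      ((Finset.univ.filter (fun S : Finset (Fin n) =>
          S.card = s ∧ S ∩ A = ∅ ∧ (S ∩ B).card = 1)).card : ℝ)
        / (((n:ℝ) - (k:ℝ)) * (Nat.choose (n - k - 1) (s - 1) : ℝ))
      = ((b * Nat.choose c (s-1) : ℕ) : ℝ)
        / (((n - k : ℕ) : ℝ) * ((Nat.choose (n-k-1) (s-1) : ℕ) : ℝ)) := by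
    intro s hs
    have hs1 : 1 ≤ s := (Finset.mem_Icc.mp hs).1
    rw [count_eq n A B s hs1, hcc, Nat.cast_sub hkn]
  rw [Finset.sum_congr rfl hterm, ← Finset.Ico_add_one_right_eq_Icc, Finset.sum_Ico_eq_sum_range,
    show n - k - d + 1 + 1 - 1 = n - k - d + 1 from by omega]
  have hterm2 : ∀ i ∈ Finset.range (n - k - d + 1),
      ((b * Nat.choose c (1+i-1) : ℕ) : ℝ)
        / (((n - k : ℕ) : ℝ) * ((Nat.choose (n-k-1) (1+i-1) : ℕ) : ℝ))
      = ((b * Nat.choose c i : ℕ) : ℝ)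
        / (((n - k : ℕ) : ℝ) * ((Nat.choose (n-k-1) i : ℕ) : ℝ)) := by
    intro i _
    rw [show 1 + i - 1 = i from by omega]
  rw [Finset.sum_congr rfl hterm2]
  have hsub : Finset.range (c+1) ⊆ Finset.range (n - k - d + 1) := by
    apply Finset.range_subset_range.mpr
    omega
  have hzero : ∀ i ∈ Finset.range (n - k - d + 1), i ∉ Finset.range (c+1) →
      ((b * Nat.choose c i : ℕ) : ℝ)
        / (((n - k : ℕ) : ℝ) * ((Nat.choose (n-k-1) i : ℕ) : ℝ)) = 0 := by
    intro i _ hi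
    rw [Finset.mem_range, not_lt] at hi
    rw [Nat.choose_eq_zero_of_lt (by omega)]
    simp
  rw [← Finset.sum_subset hsub hzero]
  have hc : c ≤ n - k - 1 := by omega
  have := sum_id (n - k - 1) c hc
  rw [show n - k - 1 + 1 - c = b from by omega, show n - k - 1 + 1 = n - k from by omega] at this
  exact this
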